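/- Let ω ∈ (0, 2) and let C be a real number with 0 < |C| < 1. Then every complex root of the polynomial ψ(z) = z^4 + ((C^2 - 1)ω^2 + 2(ω - 1))z^2 + (ω - 1)^2 has modulus strictly less than 1. -/

import Mathlib

open Complex

/-- Auxiliary: roots of a real quadratic with suitable sign conditions lie in the unit disc. -/
lemma quad_roots_in_disc (b c : ℝ) (hc0 : 0 ≤ c) (hc1 : c < 1)
    (h1 : 0 < 1 + b + c) (h2 : 0 < 1 - b + c) (w : ℂ)
    (hw : w ^ 2 + (b : ℂ) * w + (c : ℂ) = 0) : ‖w‖ < 1 := by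
  set D : ℝ := b ^ 2 - 4 * c with hD
  have hDc : ((D : ℝ) : ℂ) = (b : ℂ) ^ 2 - 4 * (c : ℂ) := by push_cast [hD]; ring
  have key : (2 * w + (b : ℂ)) ^ 2 = (D : ℂ) := by
    linear_combination 4 * hw - hDc
  by_cases hDpos : 0 ≤ D
  · -- real roots
    set s : ℝ := Real.sqrt D with hs
    have hs0 : 0 ≤ s := Real.sqrt_nonneg D
    have hs2 : s ^ 2 = D := Real.sq_sqrt hDpos
    have hfac : (2 * w + (b : ℂ) - (s : ℂ)) * (2 * w + (b : ℂ) + (s : ℂ)) = 0 := by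
      have : ((s : ℝ) : ℂ) ^ 2 = (D : ℂ) := by exact_mod_cast congrArg (Complex.ofReal ·) hs2
      linear_combination key - this
    rcases mul_eq_zero.mp hfac with h | h
    · have hwval : w = (((s - b) / 2 : ℝ) : ℂ) := by
        push_cast
        linear_combination h / 2
      rw [hwval, Complex.norm_real, Real.norm_eq_abs, abs_lt]
      constructor <;> nlinarith [sq_nonneg (s - (2 + b)), sq_nonneg s]
    · have hwval : w = (((-s - b) / 2 : ℝ) : ℂ) := by
        push_cast
        linear_combination h / 2
      rw [hwval, Complex.norm_real, Real.norm_eq_abs, abs_lt]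
      constructor <;> nlinarith [sq_nonneg (s - (2 - b)), sq_nonneg s]
  · -- complex conjugate roots
    push_neg at hDpos
    have hre : ((2 * w + (b : ℂ)) ^ 2).re = D := by rw [key]; simp
    have him : ((2 * w + (b : ℂ)) ^ 2).im = 0 := by rw [key]; simp
    set u : ℂ := 2 * w + (b : ℂ) with hu
    have hre' : u.re ^ 2 - u.im ^ 2 = D := by
      have := hre
      simp [Complex.sq_norm, pow_two, Complex.mul_re] at this ⊢
      linarith [this]
    have him' : 2 * u.re * u.im = 0 := by
      have := him
      simp [pow_two, Complex.mul_im] at this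
      linarith [this]
    have hure : u.re = 0 := by
      rcases mul_eq_zero.mp him' with h | h
      · rcases mul_eq_zero.mp h with h | h
        · norm_num at h
        · exact h
      · exfalso; rw [h] at hre'; nlinarith [sq_nonneg u.re]
    have huim : u.im ^ 2 = -D := by nlinarith [hre']
    have hwre : w.re = -b / 2 := by
      have : u.re = 2 * w.re + b := by
        simp [hu, Complex.add_re, Complex.mul_re]
      rw [hure] at this; linarith
    have hwim : u.im = 2 * w.im := by
      simp [hu, Complex.add_im, Complex.mul_im]
    have habs : ‖w‖ ^ 2 = c := by
      rw [Complex.sq_norm, Complex.normSq_apply, hwre]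
      have : w.im * w.im = -D / 4 := by
        have h4 : u.im ^ 2 = 4 * (w.im * w.im) := by rw [hwim]; ring
        linarith [huim]
      rw [this]
      field_simp [hD]
      ring
    nlinarith [norm_nonneg w, habs]

/-- For `ω ∈ (0,2)` and `0 < |C| < 1`, every complex root of
`ψ(z) = z⁴ + ((C²-1)ω² + 2(ω-1))z² + (ω-1)²` has modulus strictly less than 1. -/
theorem dissipative_branch_points_in_disc (ω C : ℝ) (hω : ω ∈ Set.Ioo (0 : ℝ) 2)
    (hC0 : 0 < |C|) (hC1 : |C| < 1) :
    ∀ z : ℂ, z ^ 4 + (((C : ℂ) ^ 2 - 1) * (ω : ℂ) ^ 2 + 2 * ((ω : ℂ) - 1)) * z ^ 2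
      + ((ω : ℂ) - 1) ^ 2 = 0 → ‖z‖ < 1 := by
  obtain ⟨hω0, hω2⟩ := hω
  intro z hz
  have hCne : C ≠ 0 := fun h => by simp [h] at hC0
  have hC2 : C ^ 2 < 1 := by nlinarith [_root_.sq_abs C, hC1, hC0]
  have hC2pos : 0 < C ^ 2 := by positivity
  set b : ℝ := (C ^ 2 - 1) * ω ^ 2 + 2 * (ω - 1) with hb
  set c : ℝ := (ω - 1) ^ 2 with hc
  have hw : (z ^ 2) ^ 2 + (b : ℂ) * z ^ 2 + (c : ℂ) = 0 := by
    push_cast [hb, hc]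
    linear_combination hz
  have hkey : 0 < C ^ 2 * ω ^ 2 := by positivity
  have h := quad_roots_in_disc b c (by positivity) (by nlinarith) (by nlinarith [hkey])
    (by nlinarith [mul_pos (sub_pos.mpr hω2) (sub_pos.mpr hω2),
        mul_le_mul_of_nonneg_right hC2.le (sq_nonneg ω)]) (z ^ 2) hw
  rw [norm_pow] at h
  nlinarith [norm_nonneg z, h]
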